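/- arXiv:2004.02837 — 5 statements merged into one kernel-verified Lean document; each statement's English description precedes it below -/
import Mathlib

section
/- An Osborne update never increases the potential: with notation as in the Osborne update lemma, Φ(x') ≤ Φ(x), with equality iff r_k(A) = c_k(A). -/
/-- An Osborne update never increases the potential, with equality iff r_k(A) = c_k(A). -/
theorem osborne_update_monotone (n : ℕ) (K : Matrix (Fin n) (Fin n) ℝ)
    (hK : ∀ i j, 0 ≤ K i j) (hpos : ∃ i j, 0 < K i j)
    (x : Fin n → ℝ) (k : Fin n)
    (A : Matrix (Fin n) (Fin n) ℝ)
    (hA : ∀ i j, A i j = Real.exp (x i - x j) * K i j)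
    (hr : 0 < ∑ j, A k j) (hc : 0 < ∑ i, A i k)
    (x' : Fin n → ℝ)
    (hx' : x' = Function.update x k
      (x k + (Real.log (∑ i, A i k) - Real.log (∑ j, A k j)) / 2)) :
    Real.log (∑ i, ∑ j, Real.exp (x' i - x' j) * K i j)
        ≤ Real.log (∑ i, ∑ j, Real.exp (x i - x j) * K i j) ∧
      (Real.log (∑ i, ∑ j, Real.exp (x' i - x' j) * K i j)
          = Real.log (∑ i, ∑ j, Real.exp (x i - x j) * K i j)
        ↔ (∑ j, A k j) = (∑ i, A i k)) := by
  set r := ∑ j, A k j with hrdef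
  set c := ∑ i, A i k with hcdef
  set d := A k k with hddef
  set E := Real.exp ((Real.log c - Real.log r) / 2) with hEdef
  have hE : 0 < E := Real.exp_pos _
  have hAnn : ∀ i j, 0 ≤ A i j := by
    intro i j; rw [hA]; exact mul_nonneg (Real.exp_pos _).le (hK i j)
  have hd0 : 0 ≤ d := hAnn k k
  have hE2 : E ^ 2 = c / r := by
    rw [sq, ← Real.exp_add]
    have h2 : (Real.log c - Real.log r) / 2 + (Real.log c - Real.log r) / 2
        = Real.log c - Real.log r := by ring
    rw [h2, Real.exp_sub, Real.exp_log hc, Real.exp_log hr]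
  have hc' : c = E ^ 2 * r := by
    rw [hE2]; field_simp
  -- term-wise identity
  have step : ∀ i j, Real.exp (x' i - x' j) * K i j =
      A i j + (if i = k then (E - 1) * A i j else 0)
        + (if j = k then (E⁻¹ - 1) * A i j else 0)
        + (if i = k ∧ j = k then (E - 1) * (E⁻¹ - 1) * A i j else 0) := by
    intro i j
    have hAij := hA i j
    rcases eq_or_ne i k with hi | hi <;> rcases eq_or_ne j k with hj | hj
    · rw [hi, hj]
      simp only [hx', Function.update_self, if_pos rfl, and_self, if_true, ite_true]
      have h0 : x k + (Real.log c - Real.log r) / 2 - (x k + (Real.log c - Real.log r) / 2)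
          = (0 : ℝ) := by ring
      have hAkk : A k k = K k k := by rw [hA, sub_self, Real.exp_zero, one_mul]
      rw [h0, Real.exp_zero, one_mul, hAkk]
      have hEE : E * E⁻¹ = 1 := mul_inv_cancel₀ hE.ne'
      linear_combination (-(K k k)) * hEE
    · rw [hi]
      simp only [hx', Function.update_self, Function.update_of_ne hj, if_pos rfl, if_neg hj,
        hj, and_false, if_false, add_zero, if_true, ite_true]
      have h0 : x k + (Real.log c - Real.log r) / 2 - x j
          = (Real.log c - Real.log r) / 2 + (x k - x j) := by ring
      rw [h0, Real.exp_add, ← hEdef, mul_assoc, ← hA k j]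
      ring
    · rw [hj]
      simp only [hx', Function.update_self, Function.update_of_ne hi, if_neg hi, if_pos rfl,
        hi, false_and, if_false, zero_add, add_zero, if_true, ite_true]
      have h0 : x i - (x k + (Real.log c - Real.log r) / 2)
          = -((Real.log c - Real.log r) / 2) + (x i - x k) := by ring
      rw [h0, Real.exp_add, Real.exp_neg, ← hEdef, mul_assoc, ← hA i k]
      ring
    · simp only [hx', Function.update_of_ne hi, Function.update_of_ne hj, if_neg hi, if_neg hj,
        hi, false_and, if_false, add_zero, ← hA i j]
  -- sum identity
  have hsum : (∑ i, ∑ j, Real.exp (x' i - x' j) * K i j)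
      = (∑ i, ∑ j, Real.exp (x i - x j) * K i j)
        + ((E - 1) * r + (E⁻¹ - 1) * c + (E - 1) * (E⁻¹ - 1) * d) := by
    have hS : (∑ i, ∑ j, Real.exp (x i - x j) * K i j) = ∑ i, ∑ j, A i j := by
      simp only [hA]
    rw [hS]
    calc (∑ i, ∑ j, Real.exp (x' i - x' j) * K i j)
        = ∑ i, ∑ j, (A i j + (if i = k then (E - 1) * A i j else 0)
          + (if j = k then (E⁻¹ - 1) * A i j else 0)
          + (if i = k ∧ j = k then (E - 1) * (E⁻¹ - 1) * A i j else 0)) := by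
          simp only [step]
      _ = (∑ i, ∑ j, A i j) + ((E - 1) * r + (E⁻¹ - 1) * c + (E - 1) * (E⁻¹ - 1) * d) := by
          simp only [Finset.sum_add_distrib]
          have hrow : (∑ i : Fin n, ∑ j : Fin n, if i = k then (E - 1) * A i j else 0)
              = (E - 1) * r := by
            have h1 : ∀ i : Fin n, (∑ j : Fin n, if i = k then (E - 1) * A i j else 0)
                = if i = k then (E - 1) * ∑ j : Fin n, A i j else 0 := by
              intro i; split <;> simp [Finset.mul_sum]
            simp only [h1, Finset.sum_ite_eq' Finset.univ k, if_pos (Finset.mem_univ k), hrdef]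
          have hcol : (∑ i : Fin n, ∑ j : Fin n, if j = k then (E⁻¹ - 1) * A i j else 0)
              = (E⁻¹ - 1) * c := by
            have h2 : ∀ i : Fin n, (∑ j : Fin n, if j = k then (E⁻¹ - 1) * A i j else 0)
                = (E⁻¹ - 1) * A i k := by
              intro i; simp [Finset.sum_ite_eq' Finset.univ k]
            simp only [h2, ← Finset.mul_sum, hcdef]
          have hcor : (∑ i : Fin n, ∑ j : Fin n,
                if i = k ∧ j = k then (E - 1) * (E⁻¹ - 1) * A i j else 0)
              = (E - 1) * (E⁻¹ - 1) * d := by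
            have h3 : ∀ i : Fin n, (∑ j : Fin n,
                  if i = k ∧ j = k then (E - 1) * (E⁻¹ - 1) * A i j else 0)
                = if i = k then (E - 1) * (E⁻¹ - 1) * A i k else 0 := by
              intro i
              rcases eq_or_ne i k with hi | hi
              · simp [hi, Finset.sum_ite_eq' Finset.univ k]
              · simp [hi]
            simp only [h3, Finset.sum_ite_eq' Finset.univ k, if_pos (Finset.mem_univ k), hddef]
          rw [hrow, hcol, hcor]
          ring
  set D := (E - 1) * r + (E⁻¹ - 1) * c + (E - 1) * (E⁻¹ - 1) * d with hDdef
  have hDE : D * E = -((E - 1) ^ 2 * (E * r + d)) := by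
    rw [hDdef, hc']
    field_simp
    ring
  have hErd : 0 < E * r + d := by nlinarith
  have hDle : D ≤ 0 := by
    have h1 : D * E ≤ 0 := by nlinarith [sq_nonneg (E - 1)]
    by_contra hcon
    push_neg at hcon
    nlinarith [mul_pos hcon hE]
  have hEone : E = 1 ↔ r = c := by
    constructor
    · intro h
      have h0 : (Real.log c - Real.log r) / 2 = 0 := by
        rw [← Real.log_exp ((Real.log c - Real.log r) / 2), ← hEdef, h, Real.log_one]
      have hlog : Real.log r = Real.log c := by linarith
      have hrr := Real.exp_log hr
      rw [hlog, Real.exp_log hc] at hrr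
      exact hrr.symm
    · intro h
      rw [hEdef, h]
      simp
  have hDzero : D = 0 ↔ r = c := by
    rw [← hEone]
    constructor
    · intro h
      have : (E - 1) ^ 2 * (E * r + d) = 0 := by
        have := hDE; rw [h, zero_mul] at this; linarith
      have h2 : (E - 1) ^ 2 = 0 := by
        rcases mul_eq_zero.mp this with h' | h'
        · exact h'
        · exact absurd h' hErd.ne'
      have := pow_eq_zero_iff (n := 2) (by norm_num) |>.mp h2
      linarith
    · intro h
      rw [hDdef, h]
      simp
  -- positivity of the sums
  have hSpos : ∀ y : Fin n → ℝ, 0 < ∑ i, ∑ j, Real.exp (y i - y j) * K i j := by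
    intro y
    obtain ⟨i0, j0, hij⟩ := hpos
    apply Finset.sum_pos'
    · intro i _
      exact Finset.sum_nonneg fun j _ => mul_nonneg (Real.exp_pos _).le (hK i j)
    · exact ⟨i0, Finset.mem_univ i0, Finset.sum_pos'
        (fun j _ => mul_nonneg (Real.exp_pos _).le (hK i0 j))
        ⟨j0, Finset.mem_univ j0, mul_pos (Real.exp_pos _) hij⟩⟩
  have hS1 := hSpos x'
  have hS2 := hSpos x
  constructor
  · apply Real.log_le_log hS1
    rw [hsum]
    linarith
  · rw [Real.log_injOn_pos.eq_iff (Set.mem_Ioi.mpr hS1) (Set.mem_Ioi.mpr hS2), hsum]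
    constructor
    · intro h
      exact hDzero.mp (by linarith)
    · intro h
      rw [hDzero.mpr h]
      ring
end

section
/- Bound on initial potential: If K ∈ ℝ_{≥0}^{n×n} is irreducible (the directed graph G_K on [n] with edges {(i,j): K_{ij} > 0} is strongly connected), then Φ(0) − Φ* ≤ log κ, where Φ* = inf_x Φ(x) and κ = (Σ_{ij} K_{ij})/K_min with K_min the minimum nonzero entry of K. -/
/-- Bound on the initial potential: Φ(0) - Φ* ≤ log κ. -/
theorem initial_potential_bound (n : ℕ) (K : Matrix (Fin n) (Fin n) ℝ)
    (hK : ∀ i j, 0 ≤ K i j)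
    (hirr : ∀ u v : Fin n, Relation.ReflTransGen (fun i j => 0 < K i j) u v)
    (Kmin : ℝ)
    (hmin : ∀ i j, 0 < K i j → Kmin ≤ K i j)
    (hmem : ∃ i j, 0 < K i j ∧ K i j = Kmin) :
    Real.log (∑ i, ∑ j, K i j) -
        (⨅ x : Fin n → ℝ, Real.log (∑ i, ∑ j, Real.exp (x i - x j) * K i j))
      ≤ Real.log ((∑ i, ∑ j, K i j) / Kmin) := by
  obtain ⟨i0, j0, hpos0, heq0⟩ := hmem
  have hKmin : 0 < Kmin := heq0 ▸ hpos0
  have hS : 0 < ∑ i, ∑ j, K i j := by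
    have h1 : ∑ j, K i0 j ≤ ∑ i, ∑ j, K i j :=
      Finset.single_le_sum (f := fun i => ∑ j, K i j)
        (fun i _ => Finset.sum_nonneg fun j _ => hK i j) (Finset.mem_univ i0)
    have h2 : K i0 j0 ≤ ∑ j, K i0 j :=
      Finset.single_le_sum (fun j _ => hK i0 j) (Finset.mem_univ j0)
    linarith
  -- key: for each x, Φ(x) ≥ log Kmin
  have key : ∀ x : Fin n → ℝ,
      Real.log Kmin ≤ Real.log (∑ i, ∑ j, Real.exp (x i - x j) * K i j) := by
    intro x
    -- find an edge (a,b) with K a b > 0 and x a - x b ≥ 0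
    obtain ⟨a, b, hab, hxab⟩ :
        ∃ a b, 0 < K a b ∧ 0 ≤ x a - x b := by
      have hne : Nonempty (Fin n) := ⟨i0⟩
      obtain ⟨a, ha⟩ := Finite.exists_max x
      by_cases hcase : ∃ v : Fin n, v ≠ a
      · obtain ⟨v, hv⟩ := hcase
        rcases (Relation.ReflTransGen.cases_head (hirr a v)) with h | ⟨k, hk, _⟩
        · exact absurd h.symm hv
        · exact ⟨a, k, hk, by linarith [ha k]⟩
      · push_neg at hcase
        have h1 : i0 = a := hcase i0
        have h2 : j0 = a := hcase j0
        have h3 : j0 = i0 := h2.trans h1.symm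
        exact ⟨i0, j0, hpos0, by rw [h3]; simp⟩
    have hterm : Kmin ≤ Real.exp (x a - x b) * K a b := by
      have h1 : (1 : ℝ) ≤ Real.exp (x a - x b) := Real.one_le_exp hxab
      nlinarith [hmin a b hab]
    have hsum : Real.exp (x a - x b) * K a b ≤
        ∑ i, ∑ j, Real.exp (x i - x j) * K i j := by
      have h2 : Real.exp (x a - x b) * K a b ≤ ∑ j, Real.exp (x a - x j) * K a j :=
        Finset.single_le_sum (f := fun j => Real.exp (x a - x j) * K a j)
          (fun j _ => mul_nonneg (Real.exp_pos _).le (hK _ _)) (Finset.mem_univ b)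
      have h1 : ∑ j, Real.exp (x a - x j) * K a j ≤
          ∑ i, ∑ j, Real.exp (x i - x j) * K i j :=
        Finset.single_le_sum (f := fun i => ∑ j, Real.exp (x i - x j) * K i j)
          (fun i _ => Finset.sum_nonneg fun j _ => mul_nonneg (Real.exp_pos _).le (hK _ _)) (Finset.mem_univ a)
      linarith
    exact Real.log_le_log hKmin (le_trans hterm hsum)
  have hinf : Real.log Kmin ≤
      ⨅ x : Fin n → ℝ, Real.log (∑ i, ∑ j, Real.exp (x i - x j) * K i j) :=
    le_ciInf key
  rw [Real.log_div (ne_of_gt hS) (ne_of_gt hKmin)]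
  linarith
end

section
/- Variation norm of nontrivial balancings: Let K ∈ ℝ_{≥0}^{n×n} be irreducible, d the diameter of the directed graph G_K, and κ = (Σ_{ij}K_{ij})/K_min. If x ∈ ℝⁿ satisfies Φ(x) ≤ Φ(0), then var(x) := max_i x_i − min_j x_j ≤ d·log κ. -/
/-- Variation norm of nontrivial balancings: if Φ(x) ≤ Φ(0) then var(x) ≤ d log κ. -/
theorem variation_norm_bound (n : ℕ) (hn : 0 < n) (K : Matrix (Fin n) (Fin n) ℝ)
    (hK : ∀ i j, 0 ≤ K i j)
    (Kmin : ℝ)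
    (hmin : ∀ i j, 0 < K i j → Kmin ≤ K i j)
    (hmem : ∃ i j, 0 < K i j ∧ K i j = Kmin)
    (d : ℕ)
    (hd : ∀ u v : Fin n, ∃ m ≤ d, ∃ p : ℕ → Fin n,
      p 0 = u ∧ p m = v ∧ ∀ l < m, 0 < K (p l) (p (l + 1)))
    (x : Fin n → ℝ)
    (hx : Real.log (∑ i, ∑ j, Real.exp (x i - x j) * K i j)
      ≤ Real.log (∑ i, ∑ j, K i j)) :
    (⨆ i, x i) - (⨅ i, x i) ≤ d * Real.log ((∑ i, ∑ j, K i j) / Kmin) := by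
  haveI : Nonempty (Fin n) := ⟨⟨0, hn⟩⟩
  obtain ⟨i0, j0, hij0, heq⟩ := hmem
  have hKmin : 0 < Kmin := heq ▸ hij0
  set S := ∑ i, ∑ j, K i j with hS
  set T := ∑ i, ∑ j, Real.exp (x i - x j) * K i j with hT
  -- single term ≤ double sum
  have hsingle : ∀ (f : Fin n → Fin n → ℝ), (∀ i j, 0 ≤ f i j) → ∀ i j,
      f i j ≤ ∑ i, ∑ j, f i j := by
    intro f hf i j
    calc f i j ≤ ∑ j, f i j :=
          Finset.single_le_sum (fun k _ => hf i k) (Finset.mem_univ j)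
      _ ≤ ∑ i, ∑ j, f i j :=
          Finset.single_le_sum (fun k _ => Finset.sum_nonneg fun l _ => hf k l)
            (Finset.mem_univ i)
  have hSpos : 0 < S := lt_of_lt_of_le hij0 (hsingle K hK i0 j0)
  have hTpos : 0 < T := by
    have := hsingle (fun i j => Real.exp (x i - x j) * K i j)
      (fun i j => mul_nonneg (Real.exp_pos _).le (hK i j)) i0 j0
    exact lt_of_lt_of_le (mul_pos (Real.exp_pos _) hij0) this
  have hTS : T ≤ S := (Real.log_le_log_iff hTpos hSpos).mp hx
  set L := Real.log (S / Kmin) with hL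
  have hSK : Kmin ≤ S := heq ▸ hsingle K hK i0 j0
  have hLnonneg : 0 ≤ L := Real.log_nonneg ((one_le_div hKmin).mpr hSK)
  -- edge bound
  have hedge : ∀ i j, 0 < K i j → x i - x j ≤ L := by
    intro i j hpos
    have h1 : Real.exp (x i - x j) * K i j ≤ S :=
      le_trans (hsingle (fun i j => Real.exp (x i - x j) * K i j)
        (fun i j => mul_nonneg (Real.exp_pos _).le (hK i j)) i j) hTS
    have h2 : Real.exp (x i - x j) ≤ S / Kmin := by
      rw [le_div_iff₀ hKmin]
      calc Real.exp (x i - x j) * Kmin ≤ Real.exp (x i - x j) * K i j :=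
            mul_le_mul_of_nonneg_left (hmin i j hpos) (Real.exp_pos _).le
        _ ≤ S := h1
    calc x i - x j = Real.log (Real.exp (x i - x j)) := (Real.log_exp _).symm
      _ ≤ L := Real.log_le_log (Real.exp_pos _) h2
  -- path bound
  have hpath : ∀ (m : ℕ) (p : ℕ → Fin n), (∀ l < m, 0 < K (p l) (p (l + 1))) →
      x (p 0) - x (p m) ≤ m * L := by
    intro m
    induction m with
    | zero => intro p _; simp
    | succ m ih =>
      intro p hp
      have h1 := ih p (fun l hl => hp l (Nat.lt_succ_of_lt hl))
      have h2 := hedge (p m) (p (m + 1)) (hp m (Nat.lt_succ_self m))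
      push_cast
      linarith
  -- choose argmax and argmin
  obtain ⟨u, hu⟩ := Finite.exists_max x
  obtain ⟨v, hv⟩ := Finite.exists_min x
  have hsup : (⨆ i, x i) = x u :=
    le_antisymm (ciSup_le hu) (le_ciSup (Set.Finite.bddAbove (Set.finite_range x)) u)
  have hinf : (⨅ i, x i) = x v :=
    le_antisymm (ciInf_le (Set.Finite.bddBelow (Set.finite_range x)) v)
      (le_ciInf hv)
  rw [hsup, hinf]
  obtain ⟨m, hmd, p, hp0, hpm, hpe⟩ := hd u v
  calc x u - x v = x (p 0) - x (p m) := by rw [hp0, hpm]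
    _ ≤ m * L := hpath m p hpe
    _ ≤ d * L := by
        have : (m : ℝ) ≤ d := Nat.cast_le.mpr hmd
        nlinarith
end

section
/- Lower bound on Hellinger imbalance via convexity: Let K ∈ ℝ_{≥0}^{n×n} be irreducible with graph diameter d and κ = (Σ_{ij}K_{ij})/K_min. Let x ∈ ℝⁿ with Φ(x) ≤ Φ(0), let P be the normalization of diag(e^x)K diag(e^{−x}), and suppose ‖r(P) − c(P)‖₁ > ε. Then H²(r(P), c(P)) ≥ (1/8)·max( (Φ(x) − Φ*)/(d log κ), ε )². -/
private lemma aux_jensen_exp {ι : Type*} (t : Finset ι) (w z : ι → ℝ)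
    (h0 : ∀ i ∈ t, 0 ≤ w i) (h1 : ∑ i ∈ t, w i = 1) :
    Real.exp (∑ i ∈ t, w i * z i) ≤ ∑ i ∈ t, w i * Real.exp (z i) := by
  have := convexOn_exp.map_sum_le (t := t) (w := w) (p := z) h0 h1
    (fun i _ => Set.mem_univ _)
  simpa [smul_eq_mul] using this

set_option maxHeartbeats 1000000 in
/-- Lower bound on the Hellinger imbalance of a nontrivial, not ε-balanced scaling. -/
theorem hellinger_imbalance_lower_bound (n : ℕ) (K : Matrix (Fin n) (Fin n) ℝ)
    (hK : ∀ i j, 0 ≤ K i j) (hpos : ∃ i j, 0 < K i j)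
    (Kmin : ℝ)
    (hmin : ∀ i j, 0 < K i j → Kmin ≤ K i j)
    (hmem : ∃ i j, 0 < K i j ∧ K i j = Kmin)
    (d : ℕ) (hdpos : 0 < d)
    (hd : ∀ u v : Fin n, ∃ m ≤ d, ∃ p : ℕ → Fin n,
      p 0 = u ∧ p m = v ∧ ∀ l < m, 0 < K (p l) (p (l + 1)))
    (Φ : (Fin n → ℝ) → ℝ)
    (hΦ : ∀ z, Φ z = Real.log (∑ i, ∑ j, Real.exp (z i - z j) * K i j))
    (xstar : Fin n → ℝ) (hstar : ∀ y, Φ xstar ≤ Φ y)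
    (x : Fin n → ℝ) (hx : Φ x ≤ Φ 0)
    (S : ℝ) (hS : S = ∑ i, ∑ j, Real.exp (x i - x j) * K i j)
    (r c : Fin n → ℝ)
    (hr : ∀ k, r k = (∑ j, Real.exp (x k - x j) * K k j) / S)
    (hc : ∀ k, c k = (∑ i, Real.exp (x i - x k) * K i k) / S)
    (ε : ℝ) (hε : ε < ∑ k, |r k - c k|) :
    (1 / 2) * ∑ k, (Real.sqrt (r k) - Real.sqrt (c k)) ^ 2
      ≥ (1 / 8) * (max ((Φ x - Φ xstar)
          / (d * Real.log ((∑ i, ∑ j, K i j) / Kmin))) ε) ^ 2 := by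
  classical
  obtain ⟨i0, j0, h0⟩ := hpos
  haveI : Nonempty (Fin n) := ⟨i0⟩
  set S0 : ℝ := ∑ i, ∑ j, K i j with hS0
  -- basic positivity facts
  have hterm_nonneg : ∀ (z : Fin n → ℝ) (i : Fin n),
      0 ≤ ∑ j, Real.exp (z i - z j) * K i j := fun z i =>
    Finset.sum_nonneg fun j _ => mul_nonneg (Real.exp_pos _).le (hK i j)
  have hsum_pos : ∀ z : Fin n → ℝ, 0 < ∑ i, ∑ j, Real.exp (z i - z j) * K i j := by
    intro z
    have h1 : 0 < Real.exp (z i0 - z j0) * K i0 j0 :=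
      mul_pos (Real.exp_pos _) h0
    have h2 : Real.exp (z i0 - z j0) * K i0 j0 ≤ ∑ j, Real.exp (z i0 - z j) * K i0 j :=
      Finset.single_le_sum (f := fun j => Real.exp (z i0 - z j) * K i0 j)
        (fun j _ => mul_nonneg (Real.exp_pos _).le (hK i0 j)) (Finset.mem_univ j0)
    have h3 : ∑ j, Real.exp (z i0 - z j) * K i0 j ≤ ∑ i, ∑ j, Real.exp (z i - z j) * K i j :=
      Finset.single_le_sum (fun i _ => hterm_nonneg z i) (Finset.mem_univ i0)
    linarith
  have hS0pos : 0 < S0 := by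
    have := hsum_pos 0
    simpa using this
  have hSpos : 0 < S := hS ▸ hsum_pos x
  have hΦ0 : Φ 0 = Real.log S0 := by simp [hΦ, hS0]
  have hKminpos : 0 < Kmin := by
    obtain ⟨i, j, hij, he⟩ := hmem; exact he ▸ hij
  have hKminS0 : Kmin ≤ S0 := by
    obtain ⟨i, j, hij, he⟩ := hmem
    have h2 : K i j ≤ ∑ j', K i j' :=
      Finset.single_le_sum (f := fun j' => K i j') (fun j' _ => hK i j') (Finset.mem_univ j)
    have h3 : ∑ j', K i j' ≤ S0 :=
      Finset.single_le_sum (fun i' _ => Finset.sum_nonneg fun j' _ => hK i' j')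
        (Finset.mem_univ i)
    linarith [he ▸ (h2.trans h3)]
  set ℓ : ℝ := Real.log (S0 / Kmin) with hℓ
  have hℓnn : 0 ≤ ℓ := Real.log_nonneg ((one_le_div hKminpos).2 hKminS0)
  set L : ℝ := (d : ℝ) * ℓ with hL
  have hLnn : 0 ≤ L := mul_nonneg (Nat.cast_nonneg d) hℓnn
  -- oscillation bound
  have osc : ∀ z : Fin n → ℝ, Φ z ≤ Φ 0 → ∀ u v, z u - z v ≤ L := by
    intro z hz u v
    set Sz : ℝ := ∑ i, ∑ j, Real.exp (z i - z j) * K i j with hSz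
    have hSzpos : 0 < Sz := hsum_pos z
    have hSzS0 : Sz ≤ S0 := by
      have := hz
      rw [hΦ z, hΦ0] at this
      exact (Real.log_le_log_iff hSzpos hS0pos).1 this
    have edge : ∀ i j, 0 < K i j → z i - z j ≤ ℓ := by
      intro i j hij
      have h2 : Real.exp (z i - z j) * K i j ≤ Sz := by
        have ha9 : Real.exp (z i - z j) * K i j ≤ ∑ j', Real.exp (z i - z j') * K i j' :=
          Finset.single_le_sum (f := fun j' => Real.exp (z i - z j') * K i j')
            (fun j' _ => mul_nonneg (Real.exp_pos _).le (hK i j')) (Finset.mem_univ j)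
        exact ha9.trans (Finset.single_le_sum (fun i' _ => hterm_nonneg z i')
          (Finset.mem_univ i))
      have h3 : Real.exp (z i - z j) ≤ S0 / K i j := by
        rw [le_div_iff₀ hij]; linarith
      have h4 : S0 / K i j ≤ S0 / Kmin :=
        div_le_div_of_nonneg_left hS0pos.le hKminpos (hmin i j hij)
      have := Real.log_le_log (Real.exp_pos _) (h3.trans h4)
      rwa [Real.log_exp] at this
    obtain ⟨m, hmd, p, hp0, hpm, hstep⟩ := hd u v
    have tel : z (p 0) - z (p m) = ∑ l ∈ Finset.range m, (z (p l) - z (p (l + 1))) := by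
      rw [Finset.sum_range_sub' (fun l => z (p l))]
    have hb : ∑ l ∈ Finset.range m, (z (p l) - z (p (l + 1))) ≤ (m : ℝ) * ℓ := by
      calc ∑ l ∈ Finset.range m, (z (p l) - z (p (l + 1)))
          ≤ ∑ _l ∈ Finset.range m, ℓ :=
            Finset.sum_le_sum fun l hl => edge _ _ (hstep l (Finset.mem_range.1 hl))
        _ = (m : ℝ) * ℓ := by simp [mul_comm]
    have hmle : (m : ℝ) * ℓ ≤ L := by
      rw [hL]
      exact mul_le_mul_of_nonneg_right (by exact_mod_cast hmd) hℓnn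
    calc z u - z v = z (p 0) - z (p m) := by rw [hp0, hpm]
      _ ≤ (m : ℝ) * ℓ := tel ▸ hb
      _ ≤ L := hmle
  -- shift of the minimizer
  obtain ⟨uM, _, huM⟩ := Finset.exists_max_image Finset.univ x Finset.univ_nonempty
  obtain ⟨um, _, hum⟩ := Finset.exists_min_image Finset.univ x Finset.univ_nonempty
  obtain ⟨vM, _, hvM⟩ := Finset.exists_max_image Finset.univ xstar Finset.univ_nonempty
  obtain ⟨vm, _, hvm⟩ := Finset.exists_min_image Finset.univ xstar Finset.univ_nonempty
  have oscx : x uM - x um ≤ L := osc x hx uM um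
  have oscs : xstar vM - xstar vm ≤ L := osc xstar (hstar 0) vM vm
  set t : ℝ := ((x uM + x um) - (xstar vM + xstar vm)) / 2 with ht
  set y : Fin n → ℝ := fun k => xstar k + t with hy
  have hxy : ∀ k, |x k - y k| ≤ L := by
    intro k
    have h1 : x k ≤ x uM := huM k (Finset.mem_univ k)
    have h2 : x um ≤ x k := hum k (Finset.mem_univ k)
    have h3 : xstar k ≤ xstar vM := hvM k (Finset.mem_univ k)
    have h4 : xstar vm ≤ xstar k := hvm k (Finset.mem_univ k)
    rw [abs_le]
    constructor <;> simp only [hy, ht] <;> nlinarith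
  have hΦy : Φ y = Φ xstar := by
    rw [hΦ, hΦ]
    congr 1
    refine Finset.sum_congr rfl fun i _ => Finset.sum_congr rfl fun j _ => ?_
    have : y i - y j = xstar i - xstar j := by simp [hy]
    rw [this]
  -- gradient inequality via Jensen
  set w : Fin n × Fin n → ℝ := fun p => Real.exp (x p.1 - x p.2) * K p.1 p.2 / S with hw
  set u : Fin n → ℝ := fun k => y k - x k with hu
  have hw0 : ∀ p ∈ Finset.univ (α := Fin n × Fin n), 0 ≤ w p := fun p _ =>
    div_nonneg (mul_nonneg (Real.exp_pos _).le (hK _ _)) hSpos.le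
  have hw1 : ∑ p : Fin n × Fin n, w p = 1 := by
    rw [hw]
    rw [Fintype.sum_prod_type]
    simp only [← Finset.sum_div]
    rw [← hS, div_self hSpos.ne']
  have jensen := aux_jensen_exp Finset.univ w (fun p => u p.1 - u p.2) hw0 hw1
  have hrw : ∀ k, r k = ∑ j, w (k, j) := by
    intro k; rw [hr, Finset.sum_div]
  have hcw : ∀ k, c k = ∑ i, w (i, k) := by
    intro k; rw [hc, Finset.sum_div]
  have hgrad_sum : ∑ p : Fin n × Fin n, w p * (u p.1 - u p.2)
      = ∑ k, (r k - c k) * u k := by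
    have e1 : ∑ p : Fin n × Fin n, w p * (u p.1 - u p.2)
        = (∑ i, (∑ j, w (i, j)) * u i) - ∑ j, (∑ i, w (i, j)) * u j := by
      rw [Fintype.sum_prod_type]
      have lhs : ∑ i, ∑ j, w (i, j) * (u i - u j)
          = (∑ i, ∑ j, w (i, j) * u i) - ∑ i, ∑ j, w (i, j) * u j := by
        rw [← Finset.sum_sub_distrib]
        refine Finset.sum_congr rfl fun i _ => ?_
        rw [← Finset.sum_sub_distrib]
        exact Finset.sum_congr rfl fun j _ => by ring
      have swap : ∑ i, ∑ j, w (i, j) * u j = ∑ j, (∑ i, w (i, j)) * u j := by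
        rw [Finset.sum_comm]
        exact Finset.sum_congr rfl fun j _ => (Finset.sum_mul ..).symm
      rw [lhs, swap]
      congr 1
      exact Finset.sum_congr rfl fun i _ => (Finset.sum_mul ..).symm
    rw [e1]
    rw [← Finset.sum_sub_distrib]
    refine Finset.sum_congr rfl fun k _ => ?_
    rw [hrw k, hcw k]; ring
  have hSy : ∑ i, ∑ j, Real.exp (y i - y j) * K i j
      = S * ∑ p : Fin n × Fin n, w p * Real.exp (u p.1 - u p.2) := by
    rw [Finset.mul_sum, Fintype.sum_prod_type]
    refine Finset.sum_congr rfl fun i _ => Finset.sum_congr rfl fun j _ => ?_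
    have hyij : y i - y j = (x i - x j) + (u i - u j) := by simp [hu]; ring
    rw [hyij, Real.exp_add, hw]
    field_simp
  have hΦxlog : Φ x = Real.log S := by rw [hΦ, hS]
  have hgrad : Φ x - Φ xstar ≤ ∑ k, (r k - c k) * (x k - y k) := by
    have hΦylog : Φ y = Real.log (∑ i, ∑ j, Real.exp (y i - y j) * K i j) := hΦ y
    have hpos2 : 0 < ∑ p : Fin n × Fin n, w p * Real.exp (u p.1 - u p.2) :=
      lt_of_lt_of_le (Real.exp_pos _) jensen
    have key : Φ xstar ≥ Φ x + ∑ k, (r k - c k) * u k := by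
      rw [← hΦy, hΦylog, hSy, Real.log_mul hSpos.ne' hpos2.ne', hΦxlog, ← hgrad_sum]
      have : Real.log (Real.exp (∑ p : Fin n × Fin n, w p * (u p.1 - u p.2)))
          ≤ Real.log (∑ p : Fin n × Fin n, w p * Real.exp (u p.1 - u p.2)) :=
        Real.log_le_log (Real.exp_pos _) jensen
      rw [Real.log_exp] at this
      linarith
    have : ∑ k, (r k - c k) * (x k - y k) = -∑ k, (r k - c k) * u k := by
      rw [← Finset.sum_neg_distrib]
      exact Finset.sum_congr rfl fun k _ => by simp [hu]; ring
    rw [this]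
    linarith
  -- ℓ¹ bound
  set N : ℝ := ∑ k, |r k - c k| with hN
  have hNnn : 0 ≤ N := Finset.sum_nonneg fun k _ => abs_nonneg _
  have hgap : Φ x - Φ xstar ≤ N * L := by
    calc Φ x - Φ xstar ≤ ∑ k, (r k - c k) * (x k - y k) := hgrad
      _ ≤ ∑ k, |r k - c k| * L := by
          refine Finset.sum_le_sum fun k _ => ?_
          calc (r k - c k) * (x k - y k) ≤ |(r k - c k) * (x k - y k)| := le_abs_self _
            _ = |r k - c k| * |x k - y k| := abs_mul _ _
            _ ≤ |r k - c k| * L := mul_le_mul_of_nonneg_left (hxy k) (abs_nonneg _)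
      _ = N * L := by rw [hN, Finset.sum_mul]
  have hA : (Φ x - Φ xstar) / L ≤ N := by
    rcases eq_or_lt_of_le hLnn with hL0 | hL0
    · rw [← hL0, div_zero]; exact hNnn
    · rw [div_le_iff₀ hL0]; exact hgap
  have hAnn : 0 ≤ (Φ x - Φ xstar) / L :=
    div_nonneg (by linarith [hstar x]) hLnn
  -- Hellinger ≥ ℓ¹ bound
  have hrnn : ∀ k, 0 ≤ r k := fun k => (hr k) ▸ div_nonneg (hterm_nonneg x k) hSpos.le
  have hcnn : ∀ k, 0 ≤ c k := fun k => (hc k) ▸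
    div_nonneg (Finset.sum_nonneg fun i _ => mul_nonneg (Real.exp_pos _).le (hK i k)) hSpos.le
  have hrsum : ∑ k, r k = 1 := by
    simp only [hr, ← Finset.sum_div]
    rw [← hS, div_self hSpos.ne']
  have hcsum : ∑ k, c k = 1 := by
    simp only [hc, ← Finset.sum_div]
    rw [Finset.sum_comm, ← hS, div_self hSpos.ne']
  set H : ℝ := ∑ k, (Real.sqrt (r k) - Real.sqrt (c k)) ^ 2 with hH
  have hHnn : 0 ≤ H := Finset.sum_nonneg fun k _ => sq_nonneg _
  have hCS : N ^ 2 ≤ H * ∑ k, (Real.sqrt (r k) + Real.sqrt (c k)) ^ 2 := by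
    have key := Finset.sum_mul_sq_le_sq_mul_sq Finset.univ
      (fun k => |Real.sqrt (r k) - Real.sqrt (c k)|)
      (fun k => Real.sqrt (r k) + Real.sqrt (c k))
    have heq : ∀ k, |Real.sqrt (r k) - Real.sqrt (c k)| * (Real.sqrt (r k) + Real.sqrt (c k))
        = |r k - c k| := by
      intro k
      have h1 : Real.sqrt (r k) ^ 2 = r k := Real.sq_sqrt (hrnn k)
      have h2 : Real.sqrt (c k) ^ 2 = c k := Real.sq_sqrt (hcnn k)
      have h3 : 0 ≤ Real.sqrt (r k) + Real.sqrt (c k) := by positivity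
      rw [← abs_of_nonneg h3, ← abs_mul]
      congr 1
      nlinarith
    simp only [sq_abs] at key
    rw [← hH] at key
    calc N ^ 2 = (∑ k, |Real.sqrt (r k) - Real.sqrt (c k)|
          * (Real.sqrt (r k) + Real.sqrt (c k))) ^ 2 := by
          rw [hN]; congr 1; exact Finset.sum_congr rfl fun k _ => (heq k).symm
      _ ≤ H * ∑ k, (Real.sqrt (r k) + Real.sqrt (c k)) ^ 2 := key
  have hsumsq : ∑ k, (Real.sqrt (r k) + Real.sqrt (c k)) ^ 2 ≤ 4 := by
    have hb : ∀ k, (Real.sqrt (r k) + Real.sqrt (c k)) ^ 2 ≤ 2 * (r k + c k) := by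
      intro k
      have h1 : Real.sqrt (r k) ^ 2 = r k := Real.sq_sqrt (hrnn k)
      have h2 : Real.sqrt (c k) ^ 2 = c k := Real.sq_sqrt (hcnn k)
      nlinarith [sq_nonneg (Real.sqrt (r k) - Real.sqrt (c k))]
    calc ∑ k, (Real.sqrt (r k) + Real.sqrt (c k)) ^ 2
        ≤ ∑ k, 2 * (r k + c k) := Finset.sum_le_sum fun k _ => hb k
      _ = 4 := by
          rw [← Finset.mul_sum, Finset.sum_add_distrib, hrsum, hcsum]; norm_num
  have hsumsqnn : 0 ≤ ∑ k, (Real.sqrt (r k) + Real.sqrt (c k)) ^ 2 :=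
    Finset.sum_nonneg fun k _ => sq_nonneg _
  have hN2 : N ^ 2 ≤ 4 * H := by nlinarith
  have hmaxnn : 0 ≤ max ((Φ x - Φ xstar) / L) ε := le_trans hAnn (le_max_left _ _)
  have hmax2 : (max ((Φ x - Φ xstar) / L) ε) ^ 2 ≤ N ^ 2 :=
    pow_le_pow_left₀ hmaxnn (max_le hA hε.le) 2
  rw [ge_iff_le]
  nlinarith
end

section
/- Approximately balancing an approximate matrix suffices: Let K, K̃ ∈ ℝ_{≥0}^{n×n} have the same support, with K_{ij}/K̃_{ij} ∈ [1−γ, 1+γ] for all (i,j) in the support, where γ ∈ (0, 1/3). If x ∈ ℝⁿ is an ε-balancing of K (i.e., for A = diag(e^x)K diag(e^{−x}), ‖r(A) − c(A)‖₁ ≤ ε·Σ_{ij}A_{ij}), then x is an (ε + 6nγ)-balancing of K̃. -/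
/-- Approximately balancing an approximate matrix suffices. -/
theorem approx_balance_approx_matrix (n : ℕ) (K Kt : Matrix (Fin n) (Fin n) ℝ)
    (hK : ∀ i j, 0 ≤ K i j) (hKt : ∀ i j, 0 ≤ Kt i j)
    (hsupp : ∀ i j, 0 < K i j ↔ 0 < Kt i j)
    (γ : ℝ) (hγ : γ ∈ Set.Ioo (0 : ℝ) (1 / 3))
    (hratio : ∀ i j, 0 < Kt i j → K i j / Kt i j ∈ Set.Icc (1 - γ) (1 + γ))
    (x : Fin n → ℝ) (ε : ℝ)
    (hbal : ∑ k, |(∑ j, Real.exp (x k - x j) * K k j)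
        - (∑ i, Real.exp (x i - x k) * K i k)|
      ≤ ε * ∑ i, ∑ j, Real.exp (x i - x j) * K i j) :
    ∑ k, |(∑ j, Real.exp (x k - x j) * Kt k j)
        - (∑ i, Real.exp (x i - x k) * Kt i k)|
      ≤ (ε + 6 * n * γ) * ∑ i, ∑ j, Real.exp (x i - x j) * Kt i j := by
  obtain ⟨hγ0, hγ3⟩ := hγ
  set a : Fin n → Fin n → ℝ := fun i j => Real.exp (x i - x j) * K i j with ha
  set b : Fin n → Fin n → ℝ := fun i j => Real.exp (x i - x j) * Kt i j with hb
  have hbnn : ∀ i j, 0 ≤ b i j := fun i j => mul_nonneg (Real.exp_pos _).le (hKt i j)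
  have hab : ∀ i j, |a i j - b i j| ≤ γ * b i j := by
    intro i j
    rcases eq_or_lt_of_le (hKt i j) with h | h
    · have hK0 : K i j = 0 := by
        by_contra hc
        have h1 := (hsupp i j).mpr
        have h2 := lt_of_le_of_ne (hK i j) (Ne.symm hc)
        have := (hsupp i j).mp h2
        linarith
      simp [ha, hb, hK0, ← h]
    · obtain ⟨h1, h2⟩ := hratio i j h
      have hu : K i j ≤ (1 + γ) * Kt i j := by
        rw [div_le_iff₀ h] at h2; linarith
      have hl : (1 - γ) * Kt i j ≤ K i j := by
        rw [le_div_iff₀ h] at h1; linarith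
      have hexp := (Real.exp_pos (x i - x j)).le
      rw [abs_le]
      constructor <;> simp only [ha, hb] <;> nlinarith
  -- sums
  set S : ℝ := ∑ i, ∑ j, a i j with hS
  set St : ℝ := ∑ i, ∑ j, b i j with hSt
  have hStnn : 0 ≤ St := Finset.sum_nonneg fun i _ =>
    Finset.sum_nonneg fun j _ => hbnn i j
  have hS_le : S ≤ (1 + γ) * St := by
    rw [hS, hSt, Finset.mul_sum]
    refine Finset.sum_le_sum fun i _ => ?_
    rw [Finset.mul_sum]
    refine Finset.sum_le_sum fun j _ => ?_
    have := (abs_le.mp (hab i j)).2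
    linarith
  have hS_ge : (1 - γ) * St ≤ S := by
    rw [hS, hSt, Finset.mul_sum]
    refine Finset.sum_le_sum fun i _ => ?_
    rw [Finset.mul_sum]
    refine Finset.sum_le_sum fun j _ => ?_
    have := (abs_le.mp (hab i j)).1
    linarith
  -- per-row bounds
  have hrow : ∀ k, |∑ j, (b k j - a k j)| ≤ γ * ∑ j, b k j := by
    intro k
    refine (Finset.abs_sum_le_sum_abs _ _).trans ?_
    rw [Finset.mul_sum]
    refine Finset.sum_le_sum fun j _ => ?_
    rw [abs_sub_comm]; exact hab k j
  have hcol : ∀ k, |∑ i, (b i k - a i k)| ≤ γ * ∑ i, b i k := by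
    intro k
    refine (Finset.abs_sum_le_sum_abs _ _).trans ?_
    rw [Finset.mul_sum]
    refine Finset.sum_le_sum fun i _ => ?_
    rw [abs_sub_comm]; exact hab i k
  have hkey : ∀ k, |(∑ j, b k j) - (∑ i, b i k)|
      ≤ |(∑ j, a k j) - (∑ i, a i k)| + γ * ((∑ j, b k j) + (∑ i, b i k)) := by
    intro k
    have e1 : (∑ j, b k j) - (∑ i, b i k)
        = ((∑ j, a k j) - (∑ i, a i k)) + (∑ j, (b k j - a k j))
          - (∑ i, (b i k - a i k)) := by
      rw [Finset.sum_sub_distrib, Finset.sum_sub_distrib]; ring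
    rw [e1]
    calc |((∑ j, a k j) - (∑ i, a i k)) + (∑ j, (b k j - a k j))
          - (∑ i, (b i k - a i k))|
        ≤ |((∑ j, a k j) - (∑ i, a i k)) + (∑ j, (b k j - a k j))|
          + |∑ i, (b i k - a i k)| := abs_sub _ _
      _ ≤ |(∑ j, a k j) - (∑ i, a i k)| + |∑ j, (b k j - a k j)|
          + |∑ i, (b i k - a i k)| := by linarith [abs_add_le ((∑ j, a k j) - (∑ i, a i k)) (∑ j, (b k j - a k j))]
      _ ≤ |(∑ j, a k j) - (∑ i, a i k)| + γ * ((∑ j, b k j) + (∑ i, b i k)) := by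
          have := hrow k; have := hcol k; linarith
  have hsum2 : ∑ k, ((∑ j, b k j) + (∑ i, b i k)) = 2 * St := by
    rw [Finset.sum_add_distrib, hSt, Finset.sum_comm]; ring
  have hmain : (∑ k, |(∑ j, b k j) - (∑ i, b i k)|) ≤ ε * S + 2 * γ * St := by
    calc (∑ k, |(∑ j, b k j) - (∑ i, b i k)|)
        ≤ ∑ k, (|(∑ j, a k j) - (∑ i, a i k)|
            + γ * ((∑ j, b k j) + (∑ i, b i k))) :=
          Finset.sum_le_sum fun k _ => hkey k
      _ = (∑ k, |(∑ j, a k j) - (∑ i, a i k)|)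
            + γ * ∑ k, ((∑ j, b k j) + (∑ i, b i k)) := by
          rw [Finset.sum_add_distrib, Finset.mul_sum]
      _ ≤ ε * S + 2 * γ * St := by rw [hsum2]; linarith [hbal]
  have htriv : (∑ k, |(∑ j, b k j) - (∑ i, b i k)|) ≤ 2 * St := by
    rw [← hsum2]
    refine Finset.sum_le_sum fun k _ => ?_
    have h1 : 0 ≤ ∑ j, b k j := Finset.sum_nonneg fun j _ => hbnn k j
    have h2 : 0 ≤ ∑ i, b i k := Finset.sum_nonneg fun i _ => hbnn i k
    rw [abs_le]; constructor <;> linarith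
  have hLnn : 0 ≤ ∑ k, |(∑ j, b k j) - (∑ i, b i k)| :=
    Finset.sum_nonneg fun k _ => abs_nonneg _
  show (∑ k, |(∑ j, b k j) - (∑ i, b i k)|) ≤ (ε + 6 * n * γ) * St
  rcases eq_or_lt_of_le hStnn with hSt0 | hStpos
  · rw [← hSt0]; linarith
  · have hε0 : 0 ≤ ε := by
      have h0 : 0 ≤ ∑ k, |(∑ j, a k j) - (∑ i, a i k)| :=
        Finset.sum_nonneg fun k _ => abs_nonneg _
      have hεS : 0 ≤ ε * S := le_trans h0 hbal
      have hSpos : 0 < S := by nlinarith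
      nlinarith
    rcases le_or_gt 2 (ε + 6 * n * γ) with hc | hc
    · calc (∑ k, |(∑ j, b k j) - (∑ i, b i k)|) ≤ 2 * St := htriv
        _ ≤ (ε + 6 * n * γ) * St := by nlinarith
    · have hn1 : (1 : ℝ) ≤ n := by
        rcases Nat.eq_zero_or_pos n with h0 | h0
        · exfalso; subst h0; simp [hSt] at hStpos
        · exact_mod_cast h0
      have hε2 : ε < 2 := by
        have : 0 ≤ 6 * (n : ℝ) * γ := by positivity
        linarith
      calc (∑ k, |(∑ j, b k j) - (∑ i, b i k)|) ≤ ε * S + 2 * γ * St := hmain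
        _ ≤ (ε + 6 * n * γ) * St := by
            nlinarith [mul_le_mul_of_nonneg_left hS_le hε0, mul_pos hγ0 hStpos,
              mul_le_mul_of_nonneg_right (show ε + 2 ≤ 6 * (n : ℝ) by linarith)
                (le_of_lt (mul_pos hγ0 hStpos))]
end
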